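/- (Policy domination scales variation distance) Fix finite nonempty sets 𝒜 (actions) and 𝒳 (observations) and a horizon k ∈ ℕ. A policy is a function π assigning to each partial history h ∈ (𝒜×𝒳)^j (j < k) a probability distribution π(·|h) over 𝒜; an environment is a function ν assigning to each partial history with a final action, h·a, a probability distribution ν(·|h,a) over 𝒳. These induce a probability distribution P^π_ν on (𝒜×𝒳)^k via P^π_ν((a_1,x_1,…,a_k,x_k)) = ∏_{j=1}^{k} π(a_j | h_{<j})·ν(x_j | h_{<j}, a_j), where h_{<j} = (a_1,x_1,…,a_{j−1},x_{j−1}). Let π₁, π₂ be policies, let ν, μ be environments, let c ∈ (0,1], and suppose π₁(a|h) ≥ c·π₂(a|h) for every action a and every partial history h. Then d_k(P^{π₁}_ν, P^{π₁}_μ) ≥ c^k · d_k(P^{π₂}_ν, P^{π₂}_μ). -/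

import Mathlib

open Finset

/-- The probability that an interaction history `h ∈ (𝒜×𝒳)^k` is produced when actions are
sampled from the policy `π` and observations are sampled from the environment `ν`:
`P^π_ν(h) = ∏_{j<k} π(a_j | h_{<j}) · ν(x_j | h_{<j}, a_j)`. -/
noncomputable def histProb {A X : Type*}
    (π : (j : ℕ) → (Fin j → A × X) → A → ℝ)
    (ν : (j : ℕ) → (Fin j → A × X) → A → X → ℝ)
    (k : ℕ) (h : Fin k → A × X) : ℝ :=
  ∏ j : Fin k,
    (π j.1 (fun i => h (Fin.castLE j.isLt.le i)) (h j).1 *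
     ν j.1 (fun i => h (Fin.castLE j.isLt.le i)) (h j).1 (h j).2)

/-- The variation distance between two probability mass functions `p, q` on a finite type:
`d(p, q) = max_{ℰ} |p(ℰ) − q(ℰ)|`. -/
noncomputable def dFin {Y : Type*} [Fintype Y] (p q : Y → ℝ) : ℝ :=
  ⨆ E : Finset Y, |∑ y ∈ E, p y - ∑ y ∈ E, q y|

lemma dFin_ge {Y : Type*} [Fintype Y] (p q : Y → ℝ) (E : Finset Y) :
    |∑ y ∈ E, p y - ∑ y ∈ E, q y| ≤ dFin p q :=
  le_ciSup (f := fun E : Finset Y => |∑ y ∈ E, p y - ∑ y ∈ E, q y|)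
    (Set.finite_range _).bddAbove E


/-- **Policy domination scales variation distance.** Let `π₁, π₂` be policies and `ν, μ`
environments over finite action/observation spaces, with horizon `k`, and let `c ∈ (0,1]`
be such that `π₁(a|h) ≥ c·π₂(a|h)` for every action `a` and partial history `h`. Then
`d_k(P^{π₁}_ν, P^{π₁}_μ) ≥ c^k · d_k(P^{π₂}_ν, P^{π₂}_μ)`. -/
theorem policy_domination_scales_variation_distance
    {A X : Type*} [Fintype A] [Fintype X] [Nonempty A] [Nonempty X]
    (k : ℕ)
    (π₁ π₂ : (j : ℕ) → (Fin j → A × X) → A → ℝ)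
    (ν μ : (j : ℕ) → (Fin j → A × X) → A → X → ℝ)
    (hπ₁nonneg : ∀ j h a, 0 ≤ π₁ j h a) (hπ₁sum : ∀ j h, ∑ a, π₁ j h a = 1)
    (hπ₂nonneg : ∀ j h a, 0 ≤ π₂ j h a) (hπ₂sum : ∀ j h, ∑ a, π₂ j h a = 1)
    (hνnonneg : ∀ j h a x, 0 ≤ ν j h a x) (hνsum : ∀ j h a, ∑ x, ν j h a x = 1)
    (hμnonneg : ∀ j h a x, 0 ≤ μ j h a x) (hμsum : ∀ j h a, ∑ x, μ j h a x = 1)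
    (c : ℝ) (hc : c ∈ Set.Ioc (0:ℝ) 1)
    (hdom : ∀ j h a, c * π₂ j h a ≤ π₁ j h a) :
    c ^ k * dFin (histProb π₂ ν k) (histProb π₂ μ k)
      ≤ dFin (histProb π₁ ν k) (histProb π₁ μ k) := by
  obtain ⟨hc0, hc1⟩ := hc
  set Pi1 : (Fin k → A × X) → ℝ :=
    fun h => ∏ j : Fin k, π₁ j.1 (fun i => h (Fin.castLE j.isLt.le i)) (h j).1 with hPi1
  set Pi2 : (Fin k → A × X) → ℝ :=
    fun h => ∏ j : Fin k, π₂ j.1 (fun i => h (Fin.castLE j.isLt.le i)) (h j).1 with hPi2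
  set D : (Fin k → A × X) → ℝ := fun h =>
    (∏ j : Fin k, ν j.1 (fun i => h (Fin.castLE j.isLt.le i)) (h j).1 (h j).2) -
    (∏ j : Fin k, μ j.1 (fun i => h (Fin.castLE j.isLt.le i)) (h j).1 (h j).2) with hD
  have hfact1 : ∀ h, histProb π₁ ν k h - histProb π₁ μ k h = Pi1 h * D h := by
    intro h
    simp only [histProb, Finset.prod_mul_distrib, hPi1, hD, mul_sub]
  have hfact2 : ∀ h, histProb π₂ ν k h - histProb π₂ μ k h = Pi2 h * D h := by
    intro h
    simp only [histProb, Finset.prod_mul_distrib, hPi2, hD, mul_sub]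
  have hPi2nn : ∀ h, 0 ≤ Pi2 h := fun h =>
    Finset.prod_nonneg fun j _ => hπ₂nonneg _ _ _
  have hdomk : ∀ h, c ^ k * Pi2 h ≤ Pi1 h := by
    intro h
    have h1 : ∏ j : Fin k, (c * π₂ j.1 (fun i => h (Fin.castLE j.isLt.le i)) (h j).1)
        ≤ Pi1 h := by
      apply Finset.prod_le_prod
      · intro j _; exact mul_nonneg hc0.le (hπ₂nonneg _ _ _)
      · intro j _; exact hdom _ _ _
    calc c ^ k * Pi2 h
        = ∏ j : Fin k, (c * π₂ j.1 (fun i => h (Fin.castLE j.isLt.le i)) (h j).1) := by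
          rw [Finset.prod_mul_distrib, Finset.prod_const]
          simp [hPi2]
      _ ≤ Pi1 h := h1
  -- key bound for sets with constant sign of D
  have key : ∀ S : Finset (Fin k → A × X),
      (∀ h ∈ S, 0 ≤ D h) → c ^ k * ∑ h ∈ S, Pi2 h * D h
        ≤ dFin (histProb π₁ ν k) (histProb π₁ μ k) := by
    intro S hS
    have step1 : c ^ k * ∑ h ∈ S, Pi2 h * D h ≤ ∑ h ∈ S, Pi1 h * D h := by
      rw [Finset.mul_sum]
      apply Finset.sum_le_sum
      intro h hh
      have := mul_le_mul_of_nonneg_right (hdomk h) (hS h hh)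
      linarith [this]
    have step2 : ∑ h ∈ S, Pi1 h * D h ≤ dFin (histProb π₁ ν k) (histProb π₁ μ k) := by
      have := dFin_ge (histProb π₁ ν k) (histProb π₁ μ k) S
      rw [← Finset.sum_sub_distrib] at this
      calc ∑ h ∈ S, Pi1 h * D h
          = ∑ h ∈ S, (histProb π₁ ν k h - histProb π₁ μ k h) := by
            apply Finset.sum_congr rfl; intro h _; rw [hfact1]
        _ ≤ |∑ h ∈ S, (histProb π₁ ν k h - histProb π₁ μ k h)| := le_abs_self _
        _ ≤ _ := this
    linarith
  have keyneg : ∀ S : Finset (Fin k → A × X),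
      (∀ h ∈ S, D h ≤ 0) → c ^ k * (-∑ h ∈ S, Pi2 h * D h)
        ≤ dFin (histProb π₁ ν k) (histProb π₁ μ k) := by
    intro S hS
    have step1 : c ^ k * (-∑ h ∈ S, Pi2 h * D h) ≤ -∑ h ∈ S, Pi1 h * D h := by
      rw [← Finset.sum_neg_distrib, Finset.mul_sum, ← Finset.sum_neg_distrib]
      apply Finset.sum_le_sum
      intro h hh
      have h2 : Pi1 h * (- D h) ≥ c ^ k * Pi2 h * (- D h) :=
        mul_le_mul_of_nonneg_right (hdomk h) (neg_nonneg.mpr (hS h hh))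
      nlinarith [h2]
    have step2 : -∑ h ∈ S, Pi1 h * D h ≤ dFin (histProb π₁ ν k) (histProb π₁ μ k) := by
      have := dFin_ge (histProb π₁ ν k) (histProb π₁ μ k) S
      rw [← Finset.sum_sub_distrib] at this
      have heq : ∑ h ∈ S, Pi1 h * D h
          = ∑ h ∈ S, (histProb π₁ ν k h - histProb π₁ μ k h) := by
        apply Finset.sum_congr rfl; intro h _; rw [hfact1]
      rw [heq]
      calc -∑ h ∈ S, (histProb π₁ ν k h - histProb π₁ μ k h)
          ≤ |∑ h ∈ S, (histProb π₁ ν k h - histProb π₁ μ k h)| := neg_le_abs _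
        _ ≤ _ := this
    linarith
  have hck : (0:ℝ) < c ^ k := pow_pos hc0 k
  have main : ∀ E : Finset (Fin k → A × X),
      |∑ y ∈ E, histProb π₂ ν k y - ∑ y ∈ E, histProb π₂ μ k y|
        ≤ dFin (histProb π₁ ν k) (histProb π₁ μ k) / c ^ k := by
    intro E
    rw [le_div_iff₀ hck, mul_comm]
    rw [← Finset.sum_sub_distrib]
    have heq : ∑ h ∈ E, (histProb π₂ ν k h - histProb π₂ μ k h) = ∑ h ∈ E, Pi2 h * D h := by
      apply Finset.sum_congr rfl; intro h _; rw [hfact2]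
    rw [heq]
    set Ep := E.filter (fun h => 0 ≤ D h) with hEp
    set En := E.filter (fun h => ¬ 0 ≤ D h) with hEn
    have hsplit : ∑ h ∈ E, Pi2 h * D h = ∑ h ∈ Ep, Pi2 h * D h + ∑ h ∈ En, Pi2 h * D h :=
      (Finset.sum_filter_add_sum_filter_not E _ _).symm
    have ha : 0 ≤ ∑ h ∈ Ep, Pi2 h * D h :=
      Finset.sum_nonneg fun h hh => mul_nonneg (hPi2nn h) ((Finset.mem_filter.mp hh).2)
    have hb : ∑ h ∈ En, Pi2 h * D h ≤ 0 :=
      Finset.sum_nonpos fun h hh =>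
        mul_nonpos_of_nonneg_of_nonpos (hPi2nn h)
          (le_of_not_ge (Finset.mem_filter.mp hh).2)
    have hkey1 := key Ep (fun h hh => (Finset.mem_filter.mp hh).2)
    have hkey2 := keyneg En (fun h hh => le_of_not_ge (Finset.mem_filter.mp hh).2)
    rw [hsplit]
    rcases abs_cases (∑ h ∈ Ep, Pi2 h * D h + ∑ h ∈ En, Pi2 h * D h) with ⟨he, _⟩ | ⟨he, _⟩ <;>
      rw [he] <;> nlinarith
  rw [mul_comm, ← le_div_iff₀ hck]
  exact ciSup_le main
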